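/- (Entropy lower bound for codeword types) Let F = {F_n: X^n → Y^{m_n}} be a sequence of δ-asymptotically good random linear codes with sup-rate R̄ < ∞. Then the limit inferior in probability, as n → ∞, of min over nonzero x ∈ X^n of [(H(P_x) + δ)·R̄ + H(P_{F_n(x)})] is at least ln|Y|. In particular, for δ = 0, all nonzero low-entropy inputs are mapped to high-entropy outputs. -/

import Mathlib

open Finset Filter

open scoped Classical

noncomputable def empDist {X : Type*} [Fintype X] {n : ℕ} (x : Fin n → X) : X → ℝ :=
  fun a => ((univ.filter fun i => x i = a).card : ℝ) / n

noncomputable def specS {X : Type*} [Fintype X] {n : ℕ}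
    (A : Finset (Fin n → X)) (P : X → ℝ) : ℝ :=
  ((A.filter fun x => empDist x = P).card : ℝ) / (A.card : ℝ)

noncomputable def jointSpec {X Y : Type*} [Fintype X] [Fintype Y] {n m : ℕ}
    (f : (Fin n → X) → (Fin m → Y)) (P : X → ℝ) (Q : Y → ℝ) : ℝ :=
  ((univ.filter fun x : Fin n → X => empDist x = P ∧ empDist (f x) = Q).card : ℝ) /
    ((Fintype.card X : ℝ) ^ n)

noncomputable def fullJointSpec (X Y : Type*) [Fintype X] [Fintype Y] (n m : ℕ)
    (P : X → ℝ) (Q : Y → ℝ) : ℝ :=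
  specS (univ : Finset (Fin n → X)) P * specS (univ : Finset (Fin m → Y)) Q

noncomputable def alphaE {X Y : Type*} [Fintype X] [Fintype Y] {n m : ℕ} {Ω : Type*}
    [Fintype Ω] (μ : Ω → ℝ) (F : Ω → (Fin n → X) → (Fin m → Y))
    (P : X → ℝ) (Q : Y → ℝ) : ℝ :=
  (∑ ω, μ ω * jointSpec (F ω) P Q) / fullJointSpec X Y n m P Q

def permAct {X : Type*} {n : ℕ} (σ : Equiv.Perm (Fin n)) (x : Fin n → X) : Fin n → X :=
  fun i => x (σ.symm i)

noncomputable def entH {X : Type*} [Fintype X] (P : X → ℝ) : ℝ :=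
  ∑ a, -(P a * Real.log (P a))

noncomputable def binEnt (x : ℝ) : ℝ := -(x * Real.log x) - (1 - x) * Real.log (1 - x)

set_option maxHeartbeats 1000000

section aux
variable {X : Type*} [Fintype X] {n : ℕ}

lemma empDist_nonneg (x : Fin n → X) (a : X) : 0 ≤ empDist x a := by
  unfold empDist; positivity

lemma empDist_le_one (hn : 0 < n) (x : Fin n → X) (a : X) : empDist x a ≤ 1 := by
  unfold empDist
  rw [div_le_one (by exact_mod_cast hn)]
  exact_mod_cast (Finset.card_filter_le _ _).trans (by simp)

lemma sum_empDist (hn : 0 < n) (x : Fin n → X) : ∑ a, empDist x a = 1 := by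
  unfold empDist
  rw [← Finset.sum_div, div_eq_one_iff_eq (by exact_mod_cast hn.ne')]
  rw [← Nat.cast_sum]
  norm_cast
  rw [← Finset.card_eq_sum_card_fiberwise (fun i _ => Finset.mem_univ (x i))]
  simp

lemma entH_empDist_nonneg (hn : 0 < n) (x : Fin n → X) : 0 ≤ entH (empDist x) := by
  unfold entH
  apply Finset.sum_nonneg
  intro a _
  have h0 := empDist_nonneg x a
  have h1 := empDist_le_one hn x a
  have := Real.log_nonpos h0 h1
  nlinarith

lemma entH_empDist_le (hn : 0 < n) (x : Fin n → X) : entH (empDist x) ≤ Fintype.card X := by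
  unfold entH
  calc ∑ a, -(empDist x a * Real.log (empDist x a)) ≤ ∑ a : X, 1 := by
        apply Finset.sum_le_sum
        intro a _
        have h0 := empDist_nonneg x a
        rcases eq_or_lt_of_le h0 with h | h
        · simp [← h]
        · have hlog := Real.log_le_sub_one_of_pos (inv_pos.mpr h)
          rw [Real.log_inv] at hlog
          nlinarith [mul_le_mul_of_nonneg_left hlog h.le, mul_inv_cancel₀ h.ne']
    _ = Fintype.card X := by simp

end aux

section aux2
variable {X : Type*} [Fintype X] {n : ℕ}
lemma prod_empDist (hn : 0 < n) (x0 x : Fin n → X) (hx : empDist x = empDist x0) :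
    ∏ i, empDist x0 (x i) = Real.exp (-(n * entH (empDist x0))) := by
  set P := empDist x0 with hP
  have key : ∏ i, P (x i) = ∏ a : X, P a ^ (univ.filter fun i => x i = a).card := by
    rw [Finset.prod_comp P x]
    apply Finset.prod_subset (Finset.subset_univ _)
    intro a _ ha
    have : (univ.filter fun i => x i = a).card = 0 := by
      rw [Finset.card_eq_zero, Finset.filter_eq_empty_iff]
      intro i _ hxa
      exact ha (Finset.mem_image.mpr ⟨i, Finset.mem_univ i, hxa⟩)
    rw [this, pow_zero]
  rw [key]
  have hcard : ∀ a : X, ((univ.filter fun i => x i = a).card : ℝ) = n * P a := by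
    intro a
    have : P a = empDist x a := by rw [hx]
    rw [this]
    unfold empDist
    field_simp
  have step : ∀ a : X, P a ^ (univ.filter fun i => x i = a).card
      = Real.exp (((univ.filter fun i => x i = a).card : ℝ) * Real.log (P a)) := by
    intro a
    rcases Nat.eq_zero_or_pos (univ.filter fun i => x i = a).card with h | h
    · rw [h]; simp
    · have hPa : 0 < P a := by
        have := hcard a
        have hn' : (0:ℝ) < n := by exact_mod_cast hn
        have : (0:ℝ) < n * P a := by rw [← hcard a]; exact_mod_cast h
        nlinarith
      rw [← Real.log_pow, Real.exp_log (pow_pos hPa _)]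
  simp_rw [step]
  rw [← Real.exp_sum]
  congr 1
  simp_rw [hcard]
  unfold entH
  rw [Finset.mul_sum]
  rw [← Finset.sum_neg_distrib]
  congr 1
  ext a
  ring

lemma count_type_le (hn : 0 < n) (x0 : Fin n → X) :
    ((univ.filter fun x : Fin n → X => empDist x = empDist x0).card : ℝ)
      ≤ Real.exp (n * entH (empDist x0)) := by
  set P := empDist x0 with hP
  have h1 : (1:ℝ) = ∑ x : Fin n → X, ∏ i, P (x i) := by
    rw [← Fintype.sum_pow P n, sum_empDist hn x0, one_pow]
  have h2 : ∑ x ∈ univ.filter (fun x : Fin n → X => empDist x = P), ∏ i, P (x i) ≤ 1 := by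
    rw [h1]
    apply Finset.sum_le_sum_of_subset_of_nonneg (Finset.filter_subset _ _)
    intro x _ _
    apply Finset.prod_nonneg
    intro i _
    unfold P
    unfold empDist
    positivity
  have h3 : ∑ x ∈ univ.filter (fun x : Fin n → X => empDist x = P), ∏ i, P (x i)
      = ((univ.filter fun x : Fin n → X => empDist x = P).card : ℝ) * Real.exp (-(n * entH P)) := by
    rw [Finset.sum_congr rfl (fun x hx => prod_empDist hn x0 x (Finset.mem_filter.mp hx).2)]
    rw [Finset.sum_const, nsmul_eq_mul]
  rw [h3] at h2
  have := mul_le_mul_of_nonneg_right h2 (Real.exp_pos ((n:ℝ) * entH P)).le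
  rw [one_mul, mul_assoc, ← Real.exp_add, neg_add_cancel, Real.exp_zero, mul_one] at this
  exact this

lemma card_image_empDist_le :
    ((univ : Finset (Fin n → X)).image (fun x => empDist x)).card ≤ (n+1) ^ Fintype.card X := by
  have hsub : (univ : Finset (Fin n → X)).image (fun x => empDist x) ⊆
      (univ : Finset (X → Fin (n+1))).image (fun c => fun a : X => ((c a : ℕ) : ℝ) / n) := by
    intro P hP
    simp only [Finset.mem_image, Finset.mem_univ, true_and] at hP ⊢
    obtain ⟨x, rfl⟩ := hP
    refine ⟨fun a => ⟨(univ.filter fun i => x i = a).card, ?_⟩, rfl⟩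
    have := Finset.card_filter_le (univ : Finset (Fin n)) (fun i => x i = a)
    simp only [Finset.card_univ, Fintype.card_fin] at this
    omega
  calc _ ≤ _ := Finset.card_le_card hsub
    _ ≤ (univ : Finset (X → Fin (n+1))).card := Finset.card_image_le
    _ = (n+1) ^ Fintype.card X := by
        rw [Finset.card_univ, Fintype.card_fun, Fintype.card_fin]

lemma empDist_eq_zero_iff {X : Type*} [Fintype X] [AddCommGroup X] (hn : 0 < n)
    (x : Fin n → X) (hx : empDist x = empDist (0 : Fin n → X)) : x = 0 := by
  have h := congrFun hx 0
  unfold empDist at h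
  simp only [Pi.zero_apply] at h
  have h1 : ((univ.filter fun i : Fin n => x i = 0).card : ℝ) = n := by
    simp only [Finset.filter_true, Finset.card_univ, Fintype.card_fin] at h
    field_simp at h
    exact_mod_cast h
  have h2 : (univ.filter fun i : Fin n => x i = 0).card = n := by exact_mod_cast h1
  have h3 : (univ.filter fun i : Fin n => x i = 0) = univ := by
    apply Finset.eq_univ_of_card
    simpa using h2
  funext i
  have := Finset.mem_filter.mp (h3 ▸ Finset.mem_univ i)
  exact this.2

end aux2

section plumbing
variable {X Y : Type*} [Fintype X] [Fintype Y] {n m : ℕ}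

lemma sum_joint_cnt (f : (Fin n → X) → (Fin m → Y)) (P : X → ℝ) :
    ∑ Q ∈ (univ.image fun y : Fin m → Y => empDist y),
      ((univ.filter fun x : Fin n → X => empDist x = P ∧ empDist (f x) = Q).card)
      = (univ.filter fun x : Fin n → X => empDist x = P).card := by
  rw [Finset.card_eq_sum_card_fiberwise
    (f := fun x => empDist (f x)) (t := univ.image fun y : Fin m → Y => empDist y)
    (fun x _ => Finset.mem_image.mpr ⟨f x, Finset.mem_univ _, rfl⟩)]
  apply Finset.sum_congr rfl
  intro Q _
  congr 1
  rw [Finset.filter_filter]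

lemma sum_type_cnt :
    ∑ Q ∈ (univ.image fun y : Fin m → Y => empDist y),
      ((univ.filter fun y : Fin m → Y => empDist y = Q).card)
      = Fintype.card Y ^ m := by
  rw [← Finset.card_eq_sum_card_fiberwise
    (f := fun y => empDist y) (t := univ.image fun y : Fin m → Y => empDist y)
    (fun y _ => Finset.mem_image.mpr ⟨y, Finset.mem_univ _, rfl⟩)]
  rw [Finset.card_univ, Fintype.card_fun, Fintype.card_fin]

lemma specS_univ_eq (P : X → ℝ) :
    specS (univ : Finset (Fin n → X)) P
      = ((univ.filter fun x : Fin n → X => empDist x = P).card : ℝ) / (Fintype.card X : ℝ) ^ n := by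
  unfold specS
  rw [Finset.card_univ, Fintype.card_fun, Fintype.card_fin]
  push_cast
  ring

lemma sum_mu_joint_eq {Ω : Type*} [Fintype Ω] (μ : Ω → ℝ) (hμ1 : ∑ ω, μ ω = 1)
    (f : Ω → (Fin n → X) → (Fin m → Y)) (P : X → ℝ) :
    ∑ Q ∈ (univ.image fun y : Fin m → Y => empDist y),
      (∑ ω, μ ω * jointSpec (f ω) P Q)
      = ((univ.filter fun x : Fin n → X => empDist x = P).card : ℝ) / (Fintype.card X : ℝ) ^ n := by
  rw [Finset.sum_comm]
  have : ∀ ω : Ω, ∑ Q ∈ (univ.image fun y : Fin m → Y => empDist y),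
      μ ω * jointSpec (f ω) P Q
      = μ ω * (((univ.filter fun x : Fin n → X => empDist x = P).card : ℝ) / (Fintype.card X : ℝ) ^ n) := by
    intro ω
    rw [← Finset.mul_sum]
    congr 1
    unfold jointSpec
    rw [← Finset.sum_div]
    rw [← Nat.cast_sum]
    rw [sum_joint_cnt (f ω) P]
  rw [Finset.sum_congr rfl (fun ω _ => this ω), ← Finset.sum_mul, hμ1, one_mul]

lemma sum_fullJoint_eq (hX : 0 < Fintype.card X) (hY : 0 < Fintype.card Y) (P : X → ℝ) :
    ∑ Q ∈ (univ.image fun y : Fin m → Y => empDist y),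
      fullJointSpec X Y n m P Q
      = ((univ.filter fun x : Fin n → X => empDist x = P).card : ℝ) / (Fintype.card X : ℝ) ^ n := by
  unfold fullJointSpec
  rw [← Finset.mul_sum]
  have : ∑ Q ∈ (univ.image fun y : Fin m → Y => empDist y),
      specS (univ : Finset (Fin m → Y)) Q = 1 := by
    have h := sum_type_cnt (Y := Y) (m := m)
    have : ∀ Q ∈ (univ.image fun y : Fin m → Y => empDist y),
        specS (univ : Finset (Fin m → Y)) Q
        = ((univ.filter fun y : Fin m → Y => empDist y = Q).card : ℝ) / (Fintype.card Y : ℝ) ^ m :=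
      fun Q _ => specS_univ_eq Q
    rw [Finset.sum_congr rfl this, ← Finset.sum_div, ← Nat.cast_sum, h]
    rw [div_eq_one_iff_eq (by positivity)]
    push_cast; ring
  rw [this, mul_one, specS_univ_eq]

end plumbing

section alphapos
variable {X Y : Type*} [Fintype X] [Fintype Y] {n m : ℕ}

lemma exists_alpha_ge_one {Ω : Type*} [Fintype Ω] (μ : Ω → ℝ) (hμ1 : ∑ ω, μ ω = 1)
    (f : Ω → (Fin n → X) → (Fin m → Y)) (hX : 0 < Fintype.card X) (hY : 0 < Fintype.card Y)
    [Nonempty Y] (x : Fin n → X) :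
    ∃ y : Fin m → Y, 1 ≤ alphaE μ f (empDist x) (empDist y) := by
  set P := empDist x with hP
  set T := (univ.image fun y : Fin m → Y => empDist y) with hT
  have hTne : T.Nonempty := ⟨empDist (Classical.arbitrary (Fin m → Y)),
    Finset.mem_image.mpr ⟨_, Finset.mem_univ _, rfl⟩⟩
  have hA := sum_mu_joint_eq μ hμ1 f P
  have hB := sum_fullJoint_eq (X := X) (Y := Y) (n := n) (m := m) hX hY P
  have hex : ∃ Q ∈ T, fullJointSpec X Y n m P Q ≤ ∑ ω, μ ω * jointSpec (f ω) P Q := by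
    by_contra hc
    push_neg at hc
    have := Finset.sum_lt_sum_of_nonempty hTne hc
    rw [hA, hB] at this
    exact lt_irrefl _ this
  obtain ⟨Q, hQT, hQ⟩ := hex
  obtain ⟨y, _, rfl⟩ := Finset.mem_image.mp hQT
  refine ⟨y, ?_⟩
  have hBpos : 0 < fullJointSpec X Y n m P (empDist y) := by
    unfold fullJointSpec
    rw [specS_univ_eq, specS_univ_eq]
    have c1 : 0 < (univ.filter fun x' : Fin n → X => empDist x' = P).card :=
      Finset.card_pos.mpr ⟨x, Finset.mem_filter.mpr ⟨Finset.mem_univ _, rfl⟩⟩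
    have c2 : 0 < (univ.filter fun y' : Fin m → Y => empDist y' = empDist y).card :=
      Finset.card_pos.mpr ⟨y, Finset.mem_filter.mpr ⟨Finset.mem_univ _, rfl⟩⟩
    have h1 : (0:ℝ) < (univ.filter fun x' : Fin n → X => empDist x' = P).card := by exact_mod_cast c1
    have h2 : (0:ℝ) < (univ.filter fun y' : Fin m → Y => empDist y' = empDist y).card := by exact_mod_cast c2
    have hX' : (0:ℝ) < (Fintype.card X : ℝ) := by exact_mod_cast hX
    have hY' : (0:ℝ) < (Fintype.card Y : ℝ) := by exact_mod_cast hY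
    positivity
  unfold alphaE
  rw [le_div_iff₀ hBpos, one_mul]
  exact hQ

end alphapos

lemma poly_exp_tendsto (d : ℕ) {c : ℝ} (hc : 0 < c) :
    Tendsto (fun x : ℝ => x ^ d * Real.exp (-(c * x))) atTop (nhds 0) := by
  have h := (Real.tendsto_pow_mul_exp_neg_atTop_nhds_zero d).comp
    (tendsto_id.const_mul_atTop hc)
  have heq : (fun x : ℝ => x ^ d * Real.exp (-(c * x)))
      = fun x : ℝ => (c ^ d)⁻¹ * (((fun y : ℝ => y ^ d * Real.exp (-y)) ∘ fun x : ℝ => c * x) x) := by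
    funext x
    simp only [Function.comp]
    rw [mul_pow]
    have : c ^ d ≠ 0 := by positivity
    field_simp
  rw [heq]
  simpa using h.const_mul (c ^ d)⁻¹

lemma seq_bound_tendsto (A : ℝ) (d : ℕ) {c : ℝ} (hc : 0 < c) :
    Tendsto (fun k : ℕ => A * ((k:ℝ)+1) ^ d * Real.exp (-((k:ℝ) * c))) atTop (nhds 0) := by
  have h2 : Tendsto (fun k : ℕ => ((k:ℝ)+1)) atTop atTop :=
    tendsto_atTop_add_const_right atTop 1 tendsto_natCast_atTop_atTop
  have h3 := (poly_exp_tendsto d hc).comp h2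
  have h4 := h3.const_mul (A * Real.exp c)
  have heq : (fun k : ℕ => A * ((k:ℝ)+1) ^ d * Real.exp (-((k:ℝ) * c)))
      = fun k : ℕ => (A * Real.exp c) *
          (((fun x : ℝ => x ^ d * Real.exp (-(c * x))) ∘ fun k : ℕ => ((k:ℝ)+1)) k) := by
    funext k
    simp only [Function.comp]
    have : -(c * ((k:ℝ)+1)) = -((k:ℝ) * c) + -c := by ring
    rw [this, Real.exp_add]
    have hec : Real.exp c * Real.exp (-c) = 1 := by
      rw [← Real.exp_add]; simp
    linear_combination (-A) * (((k:ℝ)+1)) ^ d * Real.exp (-((k:ℝ)*c)) * hec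
  rw [heq]
  simpa using h4

lemma exp_arith (n m δ Rbar β ε cX lY HP HQ : ℝ)
    (hn0 : 0 ≤ n) (hm0 : 0 ≤ m) (hδ0 : 0 ≤ δ) (hε0 : 0 < ε) (hε1 : ε ≤ 1)
    (hHP0 : 0 ≤ HP) (hHP1 : HP ≤ cX)
    (hcond : (HP + δ) * Rbar + HQ < β)
    (hnm : n ≤ m * (Rbar + ε))
    (hεs : ε * (cX + δ + Rbar + 1) ≤ (lY - β)/2) :
    n * (δ + ε) + n * HP + m * HQ - m * lY ≤ -(m * ((lY - β)/2)) := by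
  set γ := lY - β with hγ'
  have hd1 : n - m * Rbar ≤ m * ε := by nlinarith
  have p1 : (HP + δ) * (n - m * Rbar) ≤ (HP + δ) * (m * ε) :=
    mul_le_mul_of_nonneg_left hd1 (by linarith)
  have p2 : m * ((HP + δ) * Rbar + HQ) ≤ m * β :=
    mul_le_mul_of_nonneg_left hcond.le hm0
  have p3 : n * ε ≤ (m * (Rbar + ε)) * ε :=
    mul_le_mul_of_nonneg_right hnm hε0.le
  have p4 : (HP + δ) * (m * ε) ≤ (cX + δ) * (m * ε) :=
    mul_le_mul_of_nonneg_right (by linarith) (by positivity)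
  have p5 : m * (ε * (cX + δ + Rbar + 1)) ≤ m * (γ/2) :=
    mul_le_mul_of_nonneg_left hεs hm0
  have p6 : m * ε * ε ≤ m * ε := by nlinarith [mul_nonneg hm0 hε0.le]
  have hlY : lY = γ + β := by rw [hγ']; ring
  rw [hlY]
  nlinarith [p1, p2, p3, p4, p5, p6]

lemma per_n_bound {X Y : Type*} [Fintype X] [Fintype Y] [AddCommGroup X] [AddCommGroup Y]
    {n m : ℕ} (hn : 0 < n) (hm : 0 < m)
    {Ω : Type*} [Fintype Ω] (μ : Ω → ℝ) (hμ0 : ∀ ω, 0 ≤ μ ω)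
    (f : Ω → ((Fin n → X) → (Fin m → Y)))
    (δ Rbar β ε : ℝ) (hβ : β < Real.log (Fintype.card Y))
    (hδ0 : 0 ≤ δ) (hε0 : 0 < ε) (hε1 : ε ≤ 1)
    (hεs : ε * ((Fintype.card X : ℝ) + δ + Rbar + 1) ≤ (Real.log (Fintype.card Y) - β)/2)
    (hδn : ∀ x : Fin n → X, x ≠ 0 → ∀ y : Fin m → Y,
      alphaE μ f (empDist x) (empDist y) ≤ Real.exp (n * (δ + ε)))
    (hnm : (n : ℝ) ≤ m * (Rbar + ε)) :
    ∑ ω ∈ univ.filter (fun ω : Ω => ∃ x : Fin n → X, x ≠ 0 ∧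
        (entH (empDist x) + δ) * Rbar + entH (empDist (f ω x)) < β), μ ω
      ≤ (((n+1) ^ Fintype.card X : ℕ) : ℝ) * (((m+1) ^ Fintype.card Y : ℕ) : ℝ)
        * Real.exp (-(m * ((Real.log (Fintype.card Y) - β)/2))) := by
  classical
  have hγpos : 0 < Real.log (Fintype.card Y) - β := by linarith
  have hX : 0 < Fintype.card X := Fintype.card_pos
  have hY : 0 < Fintype.card Y := Fintype.card_pos
  have hXr : (0:ℝ) < (Fintype.card X : ℝ) := by exact_mod_cast hX
  have hYr : (0:ℝ) < (Fintype.card Y : ℝ) := by exact_mod_cast hY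
  set TP := (univ.image fun x : Fin n → X => empDist x) with hTP
  set TQ := (univ.image fun y : Fin m → Y => empDist y) with hTQ
  set S' := ((TP.erase (empDist (0 : Fin n → X))) ×ˢ TQ).filter
      (fun PQ : (X → ℝ) × (Y → ℝ) => (entH PQ.1 + δ) * Rbar + entH PQ.2 < β) with hS'
  set bad : Ω → Finset (Fin n → X) := fun ω => univ.filter (fun x : Fin n → X =>
      x ≠ 0 ∧ (entH (empDist x) + δ) * Rbar + entH (empDist (f ω x)) < β) with hbad
  set cnt : Ω → (X → ℝ) × (Y → ℝ) → ℕ := fun ω PQ =>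
      (univ.filter fun x : Fin n → X => empDist x = PQ.1 ∧ empDist (f ω x) = PQ.2).card with hcnt
  -- Step A
  have stepA : ∑ ω ∈ univ.filter (fun ω : Ω => ∃ x : Fin n → X, x ≠ 0 ∧
        (entH (empDist x) + δ) * Rbar + entH (empDist (f ω x)) < β), μ ω
      ≤ ∑ ω, μ ω * ((bad ω).card : ℝ) := by
    have h1 : ∀ ω ∈ univ.filter (fun ω : Ω => ∃ x : Fin n → X, x ≠ 0 ∧
        (entH (empDist x) + δ) * Rbar + entH (empDist (f ω x)) < β),
        μ ω ≤ μ ω * ((bad ω).card : ℝ) := by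
      intro ω hω
      obtain ⟨x, hx1, hx2⟩ := (Finset.mem_filter.mp hω).2
      have : 0 < (bad ω).card := Finset.card_pos.mpr
        ⟨x, Finset.mem_filter.mpr ⟨Finset.mem_univ _, hx1, hx2⟩⟩
      have h1 : (1:ℝ) ≤ ((bad ω).card : ℝ) := by exact_mod_cast this
      nlinarith [hμ0 ω]
    calc _ ≤ ∑ ω ∈ univ.filter (fun ω : Ω => ∃ x : Fin n → X, x ≠ 0 ∧
            (entH (empDist x) + δ) * Rbar + entH (empDist (f ω x)) < β),
            μ ω * ((bad ω).card : ℝ) := Finset.sum_le_sum h1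
      _ ≤ ∑ ω, μ ω * ((bad ω).card : ℝ) := by
          apply Finset.sum_le_sum_of_subset_of_nonneg (Finset.filter_subset _ _)
          intro ω _ _
          have := hμ0 ω
          positivity
  -- Step B
  have stepB : ∀ ω, ((bad ω).card : ℝ) ≤ ∑ PQ ∈ S', (cnt ω PQ : ℝ) := by
    intro ω
    have hmem : ∀ x ∈ bad ω, (empDist x, empDist (f ω x)) ∈ S' := by
      intro x hx
      obtain ⟨-, hx1, hx2⟩ := Finset.mem_filter.mp hx
      refine Finset.mem_filter.mpr ⟨Finset.mem_product.mpr ⟨?_, ?_⟩, hx2⟩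
      · refine Finset.mem_erase.mpr ⟨?_, Finset.mem_image.mpr ⟨x, Finset.mem_univ _, rfl⟩⟩
        intro hP0
        exact hx1 (empDist_eq_zero_iff hn x hP0)
      · exact Finset.mem_image.mpr ⟨f ω x, Finset.mem_univ _, rfl⟩
    rw [Finset.card_eq_sum_card_fiberwise hmem]
    push_cast
    apply Finset.sum_le_sum
    intro PQ _
    have : (bad ω).filter (fun x => (empDist x, empDist (f ω x)) = PQ)
        ⊆ univ.filter fun x : Fin n → X => empDist x = PQ.1 ∧ empDist (f ω x) = PQ.2 := by
      intro x hx
      obtain ⟨-, hpair⟩ := Finset.mem_filter.mp hx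
      refine Finset.mem_filter.mpr ⟨Finset.mem_univ _, ?_, ?_⟩
      · rw [← hpair]
      · rw [← hpair]
    exact_mod_cast Finset.card_le_card this
  -- Step C : per-pair bound
  have stepC : ∀ PQ ∈ S', (Fintype.card X : ℝ) ^ n * ∑ ω, μ ω * jointSpec (f ω) PQ.1 PQ.2
      ≤ Real.exp (-(m * ((Real.log (Fintype.card Y) - β)/2))) := by
    intro PQ hPQ
    obtain ⟨hprod, hcond⟩ := Finset.mem_filter.mp hPQ
    obtain ⟨hP, hQ⟩ := Finset.mem_product.mp hprod
    obtain ⟨hPne, hPim⟩ := Finset.mem_erase.mp hP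
    obtain ⟨x, -, hxP⟩ := Finset.mem_image.mp hPim
    obtain ⟨y, -, hyQ⟩ := Finset.mem_image.mp hQ
    have hx0 : x ≠ 0 := fun h => hPne (by rw [← hxP, h])
    have halpha := hδn x hx0 y
    rw [hxP, hyQ] at halpha
    -- fullJoint positivity and value
    have c1 : 0 < ((univ.filter fun x' : Fin n → X => empDist x' = PQ.1).card) :=
      Finset.card_pos.mpr ⟨x, Finset.mem_filter.mpr ⟨Finset.mem_univ _, hxP⟩⟩
    have c2 : 0 < ((univ.filter fun y' : Fin m → Y => empDist y' = PQ.2).card) :=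
      Finset.card_pos.mpr ⟨y, Finset.mem_filter.mpr ⟨Finset.mem_univ _, hyQ⟩⟩
    have c1r : (0:ℝ) < ((univ.filter fun x' : Fin n → X => empDist x' = PQ.1).card : ℝ) := by
      exact_mod_cast c1
    have c2r : (0:ℝ) < ((univ.filter fun y' : Fin m → Y => empDist y' = PQ.2).card : ℝ) := by
      exact_mod_cast c2
    have hfull : fullJointSpec X Y n m PQ.1 PQ.2
        = ((univ.filter fun x' : Fin n → X => empDist x' = PQ.1).card : ℝ) / (Fintype.card X : ℝ) ^ n
          * (((univ.filter fun y' : Fin m → Y => empDist y' = PQ.2).card : ℝ) / (Fintype.card Y : ℝ) ^ m) := by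
      unfold fullJointSpec
      rw [specS_univ_eq, specS_univ_eq]
    have hfullpos : 0 < fullJointSpec X Y n m PQ.1 PQ.2 := by
      rw [hfull]; positivity
    have hA : ∑ ω, μ ω * jointSpec (f ω) PQ.1 PQ.2
        ≤ Real.exp (n * (δ + ε)) * fullJointSpec X Y n m PQ.1 PQ.2 := by
      unfold alphaE at halpha
      rw [div_le_iff₀ hfullpos] at halpha
      exact halpha
    -- count bounds
    have hN : ((univ.filter fun x' : Fin n → X => empDist x' = PQ.1).card : ℝ)
        ≤ Real.exp (n * entH PQ.1) := by
      have := count_type_le hn x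
      rw [hxP] at this
      exact this
    have hM : ((univ.filter fun y' : Fin m → Y => empDist y' = PQ.2).card : ℝ)
        ≤ Real.exp (m * entH PQ.2) := by
      have := count_type_le hm y
      rw [hyQ] at this
      exact this
    have hpow : ((Fintype.card Y : ℝ)) ^ m = Real.exp (m * Real.log (Fintype.card Y)) := by
      rw [← Real.log_pow, Real.exp_log (by positivity)]
    -- entropy bounds
    have hHP0 : 0 ≤ entH PQ.1 := by rw [← hxP]; exact entH_empDist_nonneg hn x
    have hHP1 : entH PQ.1 ≤ (Fintype.card X : ℝ) := by rw [← hxP]; exact entH_empDist_le hn x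
    -- combine
    have hsum : Real.exp (n * (δ + ε) + n * entH PQ.1 + m * entH PQ.2 - m * Real.log (Fintype.card Y))
        = Real.exp (n * (δ + ε)) * Real.exp (n * entH PQ.1) * Real.exp (m * entH PQ.2)
          / Real.exp (m * Real.log (Fintype.card Y)) := by
      rw [← Real.exp_add, ← Real.exp_add, ← Real.exp_sub]
    have key : (Fintype.card X : ℝ) ^ n * (Real.exp (n * (δ + ε)) * fullJointSpec X Y n m PQ.1 PQ.2)
        ≤ Real.exp (n * (δ + ε) + n * entH PQ.1 + m * entH PQ.2 - m * Real.log (Fintype.card Y)) := by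
      rw [hfull, hpow, hsum]
      have hXn : (0:ℝ) < (Fintype.card X : ℝ) ^ n := by positivity
      have lhse : (Fintype.card X : ℝ) ^ n * (Real.exp (n * (δ + ε)) *
              (((univ.filter fun x' : Fin n → X => empDist x' = PQ.1).card : ℝ) / (Fintype.card X : ℝ) ^ n
              * (((univ.filter fun y' : Fin m → Y => empDist y' = PQ.2).card : ℝ)
                / Real.exp (m * Real.log (Fintype.card Y)))))
          = Real.exp (n * (δ + ε)) * ((univ.filter fun x' : Fin n → X => empDist x' = PQ.1).card : ℝ)
              * ((univ.filter fun y' : Fin m → Y => empDist y' = PQ.2).card : ℝ)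
              / Real.exp (m * Real.log (Fintype.card Y)) := by
        field_simp
      rw [lhse]
      gcongr
    have hexp : (n:ℝ) * (δ + ε) + n * entH PQ.1 + m * entH PQ.2 - m * Real.log (Fintype.card Y)
        ≤ -(m * ((Real.log (Fintype.card Y) - β)/2)) := by
      have := exp_arith (n:ℝ) (m:ℝ) δ Rbar β ε (Fintype.card X : ℝ) (Real.log (Fintype.card Y))
        (entH PQ.1) (entH PQ.2) (by positivity) (by positivity) hδ0 hε0 hε1 hHP0 hHP1 hcond hnm hεs
      linarith [this]
    have hApos : (0:ℝ) ≤ (Fintype.card X : ℝ) ^ n := by positivity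
    calc (Fintype.card X : ℝ) ^ n * ∑ ω, μ ω * jointSpec (f ω) PQ.1 PQ.2
        ≤ (Fintype.card X : ℝ) ^ n * (Real.exp (n * (δ + ε)) * fullJointSpec X Y n m PQ.1 PQ.2) :=
          mul_le_mul_of_nonneg_left hA hApos
      _ ≤ Real.exp (n * (δ + ε) + n * entH PQ.1 + m * entH PQ.2 - m * Real.log (Fintype.card Y)) := key
      _ ≤ Real.exp (-(m * ((Real.log (Fintype.card Y) - β)/2))) := Real.exp_le_exp.mpr hexp
  -- assembling
  have swap : ∑ ω, μ ω * ∑ PQ ∈ S', (cnt ω PQ : ℝ)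
      = ∑ PQ ∈ S', (Fintype.card X : ℝ) ^ n * ∑ ω, μ ω * jointSpec (f ω) PQ.1 PQ.2 := by
    simp_rw [Finset.mul_sum]
    rw [Finset.sum_comm]
    apply Finset.sum_congr rfl
    intro PQ _
    apply Finset.sum_congr rfl
    intro ω _
    have hj : jointSpec (f ω) PQ.1 PQ.2 = (cnt ω PQ : ℝ) / (Fintype.card X : ℝ) ^ n := rfl
    rw [hj]
    have hXn : ((Fintype.card X : ℝ)) ^ n ≠ 0 := by positivity
    field_simp
  have cardS' : (S'.card : ℝ) ≤ (((n+1) ^ Fintype.card X : ℕ) : ℝ) * (((m+1) ^ Fintype.card Y : ℕ) : ℝ) := by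
    have h1 : S'.card ≤ ((n+1) ^ Fintype.card X) * ((m+1) ^ Fintype.card Y) := by
      calc S'.card ≤ ((TP.erase (empDist (0 : Fin n → X))) ×ˢ TQ).card :=
            Finset.card_filter_le _ _
        _ = (TP.erase (empDist (0 : Fin n → X))).card * TQ.card := Finset.card_product _ _
        _ ≤ TP.card * TQ.card :=
            Nat.mul_le_mul_right _ (Finset.card_erase_le)
        _ ≤ ((n+1) ^ Fintype.card X) * ((m+1) ^ Fintype.card Y) :=
            Nat.mul_le_mul card_image_empDist_le card_image_empDist_le
    exact_mod_cast h1
  calc ∑ ω ∈ univ.filter (fun ω : Ω => ∃ x : Fin n → X, x ≠ 0 ∧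
        (entH (empDist x) + δ) * Rbar + entH (empDist (f ω x)) < β), μ ω
      ≤ ∑ ω, μ ω * ((bad ω).card : ℝ) := stepA
    _ ≤ ∑ ω, μ ω * ∑ PQ ∈ S', (cnt ω PQ : ℝ) :=
        Finset.sum_le_sum (fun ω _ => mul_le_mul_of_nonneg_left (stepB ω) (hμ0 ω))
    _ = ∑ PQ ∈ S', (Fintype.card X : ℝ) ^ n * ∑ ω, μ ω * jointSpec (f ω) PQ.1 PQ.2 := swap
    _ ≤ ∑ PQ ∈ S', Real.exp (-(m * ((Real.log (Fintype.card Y) - β)/2))) := Finset.sum_le_sum stepC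
    _ = (S'.card : ℝ) * Real.exp (-(m * ((Real.log (Fintype.card Y) - β)/2))) := by rw [Finset.sum_const, nsmul_eq_mul]
    _ ≤ (((n+1) ^ Fintype.card X : ℕ) : ℝ) * (((m+1) ^ Fintype.card Y : ℕ) : ℝ)
        * Real.exp (-(m * ((Real.log (Fintype.card Y) - β)/2))) :=
        mul_le_mul_of_nonneg_right cardS' (Real.exp_pos _).le



theorem stmt15 {X Y : Type*} [Fintype X] [Fintype Y] [AddCommGroup X] [AddCommGroup Y]
    (m : ℕ → ℕ) (hm : ∀ n, 0 < m n)
    (Ω : ℕ → Type*) [∀ n, Fintype (Ω n)] (μ : ∀ n, Ω n → ℝ)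
    (hμ0 : ∀ n ω, 0 ≤ μ n ω) (hμ1 : ∀ n, ∑ ω, μ n ω = 1)
    (F : ∀ n, Ω n → ((Fin n → X) →+ (Fin (m n) → Y)))
    (δ Rbar : ℝ)
    (hδ : ∀ ε > (0 : ℝ), ∀ᶠ n : ℕ in atTop, ∀ x : Fin n → X, x ≠ 0 → ∀ y : Fin (m n) → Y,
      alphaE (μ n) (fun ω => ⇑(F n ω)) (empDist x) (empDist y) ≤ Real.exp (n * (δ + ε)))
    (hR : ∀ ε > (0 : ℝ), ∀ᶠ n : ℕ in atTop, (n : ℝ) / (m n : ℝ) ≤ Rbar + ε) :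
    ∀ β < Real.log (Fintype.card Y),
      Tendsto (fun n => ∑ ω ∈ univ.filter (fun ω : Ω n => ∃ x : Fin n → X, x ≠ 0 ∧
          (entH (empDist x) + δ) * Rbar + entH (empDist (F n ω x)) < β), μ n ω)
        atTop (nhds 0) := by
  intro β hβ
  classical
  rcases le_or_gt (Fintype.card X) 1 with hX1 | hX1
  · haveI : Subsingleton X := Fintype.card_le_one_iff_subsingleton.mp hX1
    have htriv : Tendsto (fun _ : ℕ => (0:ℝ)) atTop (nhds 0) := tendsto_const_nhds
    apply htriv.congr
    intro n
    rw [Finset.sum_filter]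
    refine (Finset.sum_eq_zero fun ω _ => ?_).symm
    rw [if_neg]
    rintro ⟨x, hx, -⟩
    exact hx (funext fun i => Subsingleton.elim _ _)
  · have hYc : 0 < Fintype.card Y := Fintype.card_pos
    have hXr : (0:ℝ) < (Fintype.card X : ℝ) := by
      have : 0 < Fintype.card X := Fintype.card_pos
      exact_mod_cast this
    have hRand : ∀ᶠ n : ℕ in atTop, ((n:ℝ)) ≤ (m n : ℝ) * (Rbar + 1) := by
      filter_upwards [hR 1 one_pos] with n h
      have hmn : (0:ℝ) < m n := by exact_mod_cast hm n
      rw [div_le_iff₀ hmn] at h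
      linarith
    have hR0 : 0 ≤ Rbar := by
      by_contra hcon
      push_neg at hcon
      have hε : 0 < -Rbar/2 := by linarith
      obtain ⟨n, h1, h2⟩ := ((hR _ hε).and (eventually_ge_atTop 1)).exists
      have hmn : (0:ℝ) < m n := by exact_mod_cast hm n
      have : (0:ℝ) ≤ (n:ℝ)/(m n) := by positivity
      linarith
    have hδ0 : 0 ≤ δ := by
      by_contra hcon
      push_neg at hcon
      have hε : 0 < -δ/2 := by linarith
      obtain ⟨n, h1, h2⟩ := ((hδ _ hε).and (eventually_ge_atTop 1)).exists
      obtain ⟨cx, hcx⟩ := Fintype.exists_ne_of_one_lt_card hX1 0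
      have hn1 : 0 < n := h2
      have hx0 : (fun _ : Fin n => cx) ≠ (0 : Fin n → X) := by
        intro hxx
        exact hcx (congrFun hxx ⟨0, hn1⟩)
      haveI : Nonempty Y := ⟨0⟩
      obtain ⟨y, hy⟩ := exists_alpha_ge_one (μ n) (hμ1 n) (fun ω => ⇑(F n ω))
        Fintype.card_pos Fintype.card_pos (fun _ : Fin n => cx)
      have h1e : (1:ℝ) ≤ Real.exp ((n:ℝ) * (δ + -δ/2)) := le_trans hy (h1 _ hx0 y)
      rw [Real.one_le_exp_iff] at h1e
      have hnr : (0:ℝ) < n := by exact_mod_cast hn1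
      nlinarith
    have hmtop : Tendsto m atTop atTop := by
      rw [tendsto_atTop]
      intro b
      have hnb : ∀ᶠ n : ℕ in atTop, ((b:ℝ) * (Rbar + 1)) < n :=
        (tendsto_natCast_atTop_atTop (R := ℝ)).eventually_gt_atTop _
      filter_upwards [hRand, hnb] with n h1 h2
      have hpos : (0:ℝ) < Rbar + 1 := by linarith
      have hb : ((b:ℝ)) * (Rbar+1) < (m n : ℝ) * (Rbar + 1) := lt_of_lt_of_le h2 h1
      have : (b:ℝ) < (m n : ℝ) := lt_of_mul_lt_mul_right hb hpos.le
      exact_mod_cast this.le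
    have hγpos : (0:ℝ) < (Real.log (Fintype.card Y) - β)/2 := by linarith
    have hCpos : (0:ℝ) < (Fintype.card X : ℝ) + δ + Rbar + 1 := by linarith
    set ε : ℝ := min 1 ((Real.log (Fintype.card Y) - β)/2 / ((Fintype.card X : ℝ) + δ + Rbar + 1))
      with hεdef
    have hε0 : 0 < ε := lt_min one_pos (by positivity)
    have hε1 : ε ≤ 1 := min_le_left _ _
    have hεs : ε * ((Fintype.card X : ℝ) + δ + Rbar + 1) ≤ (Real.log (Fintype.card Y) - β)/2 := by
      have h2 : ε ≤ (Real.log (Fintype.card Y) - β)/2 / ((Fintype.card X : ℝ) + δ + Rbar + 1) :=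
        min_le_right _ _
      calc ε * ((Fintype.card X : ℝ) + δ + Rbar + 1)
          ≤ ((Real.log (Fintype.card Y) - β)/2 / ((Fintype.card X : ℝ) + δ + Rbar + 1))
            * ((Fintype.card X : ℝ) + δ + Rbar + 1) :=
            mul_le_mul_of_nonneg_right h2 hCpos.le
        _ = (Real.log (Fintype.card Y) - β)/2 := by field_simp
    -- the dominating sequence
    set g : ℕ → ℝ := fun k => (Rbar+1) ^ Fintype.card X
        * ((k:ℝ)+1) ^ (Fintype.card X + Fintype.card Y)
        * Real.exp (-((k:ℝ) * ((Real.log (Fintype.card Y) - β)/2))) with hgdef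
    have hgt : Tendsto (fun n => g (m n)) atTop (nhds 0) :=
      (seq_bound_tendsto ((Rbar+1) ^ Fintype.card X)
        (Fintype.card X + Fintype.card Y) hγpos).comp hmtop
    apply tendsto_of_tendsto_of_tendsto_of_le_of_le' (tendsto_const_nhds) hgt
    · filter_upwards with n
      exact Finset.sum_nonneg fun ω _ => hμ0 n ω
    · filter_upwards [hδ ε hε0, hR ε hε0, eventually_ge_atTop 1] with n h1 h2 h3
      have hn : 0 < n := h3
      have hmn := hm n
      have hmnr : (0:ℝ) < (m n : ℝ) := by exact_mod_cast hmn
      have hnm : ((n:ℝ)) ≤ (m n : ℝ) * (Rbar + ε) := by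
        rw [div_le_iff₀ hmnr] at h2
        linarith
      have hb := per_n_bound hn hmn (μ n) (hμ0 n) (fun ω => ⇑(F n ω)) δ Rbar β ε hβ hδ0 hε0 hε1
        hεs h1 hnm
      refine hb.trans ?_
      have hstep : ((n:ℝ)+1) ≤ (Rbar+1) * ((m n : ℝ)+1) := by nlinarith
      have hpw : ((n:ℝ)+1) ^ (Fintype.card X) ≤ ((Rbar+1) * ((m n:ℝ)+1)) ^ (Fintype.card X) :=
        pow_le_pow_left₀ (by positivity) hstep _
      have hddd : ((((n+1) ^ Fintype.card X : ℕ)) : ℝ) * ((((m n+1) ^ Fintype.card Y : ℕ)) : ℝ)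
          = ((n:ℝ)+1) ^ Fintype.card X * ((m n:ℝ)+1) ^ Fintype.card Y := by
        push_cast
        ring
      rw [hddd, hgdef]
      have hexps : (0:ℝ) ≤ Real.exp (-((m n : ℝ) * ((Real.log (Fintype.card Y) - β)/2))) :=
        (Real.exp_pos _).le
      calc ((n:ℝ)+1) ^ Fintype.card X * ((m n:ℝ)+1) ^ Fintype.card Y
            * Real.exp (-((m n : ℝ) * ((Real.log (Fintype.card Y) - β)/2)))
          ≤ ((Rbar+1) * ((m n:ℝ)+1)) ^ Fintype.card X * ((m n:ℝ)+1) ^ Fintype.card Y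
            * Real.exp (-((m n : ℝ) * ((Real.log (Fintype.card Y) - β)/2))) := by
            apply mul_le_mul_of_nonneg_right _ hexps
            apply mul_le_mul_of_nonneg_right hpw (by positivity)
        _ = (Rbar+1) ^ Fintype.card X * ((m n:ℝ)+1) ^ (Fintype.card X + Fintype.card Y)
            * Real.exp (-((m n : ℝ) * ((Real.log (Fintype.card Y) - β)/2))) := by
            rw [mul_pow, pow_add]
            ring
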